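/- Let $\Omega$ be a commutative semigroup and $(A, \prec_{\alpha,\beta}, \succ_{\alpha,\beta}, p_\alpha, q_\alpha)_{\alpha,\beta\in\Omega}$ a BiHom-$\Omega$-dendriform algebra with $p_\alpha, q_\alpha$ bijective. Define $x\blacktriangleright_{\alpha,\beta}y := x\succ_{\alpha,\beta}y - (p_\beta^{-1}q_\beta(y))\prec_{\beta,\alpha}(p_\alpha q_\alpha^{-1}(x))$. Then $(A, \blacktriangleright_{\alpha,\beta}, p_\alpha, q_\alpha)_{\alpha,\beta\in\Omega}$ is a BiHom-$\Omega$-pre-Lie algebra. -/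
import Mathlib


/-- A BiHom-Ω-dendriform algebra with bijective structure maps gives a
BiHom-Ω-pre-Lie algebra. -/
theorem stmt_8
    {K : Type*} [Field K] {Ω : Type*} [CommSemigroup Ω]
    {A : Type*} [AddCommGroup A] [Module K A]
    (prec succ : Ω → Ω → A →ₗ[K] A →ₗ[K] A)
    (p q : Ω → A →ₗ[K] A)
    -- the families commute
    (hpq : ∀ (α : Ω) (x : A), p α (q α x) = q α (p α x))
    -- multiplicativity
    (hpprec : ∀ (α β : Ω) (x y : A), p (α * β) (prec α β x y) = prec α β (p α x) (p β y))
    (hpsucc : ∀ (α β : Ω) (x y : A), p (α * β) (succ α β x y) = succ α β (p α x) (p β y))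
    (hqprec : ∀ (α β : Ω) (x y : A), q (α * β) (prec α β x y) = prec α β (q α x) (q β y))
    (hqsucc : ∀ (α β : Ω) (x y : A), q (α * β) (succ α β x y) = succ α β (q α x) (q β y))
    -- BiHom-Ω-dendriform axioms
    (hden1 : ∀ (α β γ : Ω) (x y z : A),
      prec (α * β) γ (prec α β x y) (q γ z)
        = prec α (β * γ) (p α x) (prec β γ y z + succ β γ y z))
    (hden2 : ∀ (α β γ : Ω) (x y z : A),
      prec (α * β) γ (succ α β x y) (q γ z) = succ α (β * γ) (p α x) (prec β γ y z))
    (hden3 : ∀ (α β γ : Ω) (x y z : A),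
      succ α (β * γ) (p α x) (succ β γ y z)
        = succ (α * β) γ (prec α β x y + succ α β x y) (q γ z))
    -- p, q are bijective, with inverses pinv, qinv
    (pinv qinv : Ω → A → A)
    (hpinv1 : ∀ (α : Ω) (x : A), p α (pinv α x) = x)
    (hpinv2 : ∀ (α : Ω) (x : A), pinv α (p α x) = x)
    (hqinv1 : ∀ (α : Ω) (x : A), q α (qinv α x) = x)
    (hqinv2 : ∀ (α : Ω) (x : A), qinv α (q α x) = x)
    -- the induced operation
    (ob : Ω → Ω → A → A → A)
    (hob : ∀ (α β : Ω) (x y : A),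
      ob α β x y = succ α β x y - prec β α (pinv β (q β y)) (p α (qinv α x))) :
    -- (A, ob, p, q) is a BiHom-Ω-pre-Lie algebra
    (∀ (α β : Ω) (x y : A), p (α * β) (ob α β x y) = ob α β (p α x) (p β y)) ∧
    (∀ (α β : Ω) (x y : A), q (α * β) (ob α β x y) = ob α β (q α x) (q β y)) ∧
    (∀ (α β γ : Ω) (x y z : A),
      ob α (β * γ) (p α (q α x)) (ob β γ (p β y) z)
          - ob (α * β) γ (ob α β (q α x) (p β y)) (q γ z)
        = ob β (α * γ) (p β (q β y)) (ob α γ (p α x) z)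
          - ob (β * α) γ (ob β α (q β y) (p α x)) (q γ z)) := by
  -- injectivity
  have pinj : ∀ (α : Ω) (a b : A), p α a = p α b → a = b := fun α a b h => by
    have := congrArg (pinv α) h; rwa [hpinv2, hpinv2] at this
  have qinj : ∀ (α : Ω) (a b : A), q α a = q α b → a = b := fun α a b h => by
    have := congrArg (qinv α) h; rwa [hqinv2, hqinv2] at this
  -- inverse commutations
  have e1 : ∀ (α : Ω) (u : A), pinv α (q α (p α u)) = q α u := fun α u => by
    rw [← hpq, hpinv2]
  have e2 : ∀ (α : Ω) (u : A), qinv α (p α (q α u)) = p α u := fun α u => by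
    rw [hpq, hqinv2]
  have e3 : ∀ (α : Ω) (u : A), q α (p α (qinv α u)) = p α u := fun α u => by
    rw [← hpq, hqinv1]
  have e4 : ∀ (α : Ω) (u : A), p α (qinv α u) = qinv α (p α u) := fun α u => by
    apply qinj α; rw [e3, hqinv1]
  have e5 : ∀ (α : Ω) (u : A), q α (pinv α u) = pinv α (q α u) := fun α u => by
    apply pinj α; rw [hpq, hpinv1, hpinv1]
  -- subtraction through inverses
  have pinv_sub : ∀ (α : Ω) (u v : A), pinv α (u - v) = pinv α u - pinv α v := fun α u v => by
    apply pinj α; rw [hpinv1, map_sub, hpinv1, hpinv1]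
  have qinv_sub : ∀ (α : Ω) (u v : A), qinv α (u - v) = qinv α u - qinv α v := fun α u v => by
    apply qinj α; rw [hqinv1, map_sub, hqinv1, hqinv1]
  -- multiplicativity of inverses
  have hpinvprec : ∀ (α β : Ω) (x y : A),
      pinv (α * β) (prec α β x y) = prec α β (pinv α x) (pinv β y) := fun α β x y => by
    apply pinj (α * β); rw [hpinv1, hpprec, hpinv1, hpinv1]
  have hpinvsucc : ∀ (α β : Ω) (x y : A),
      pinv (α * β) (succ α β x y) = succ α β (pinv α x) (pinv β y) := fun α β x y => by
    apply pinj (α * β); rw [hpinv1, hpsucc, hpinv1, hpinv1]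
  have hqinvprec : ∀ (α β : Ω) (x y : A),
      qinv (α * β) (prec α β x y) = prec α β (qinv α x) (qinv β y) := fun α β x y => by
    apply qinj (α * β); rw [hqinv1, hqprec, hqinv1, hqinv1]
  have hqinvsucc : ∀ (α β : Ω) (x y : A),
      qinv (α * β) (succ α β x y) = succ α β (qinv α x) (qinv β y) := fun α β x y => by
    apply qinj (α * β); rw [hqinv1, hqsucc, hqinv1, hqinv1]
  -- commuted-index variants
  have hpprec' : ∀ (α β : Ω) (x y : A),
      p (α * β) (prec β α x y) = prec β α (p β x) (p α y) := fun α β x y => by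
    rw [mul_comm]; exact hpprec β α x y
  have hqprec' : ∀ (α β : Ω) (x y : A),
      q (α * β) (prec β α x y) = prec β α (q β x) (q α y) := fun α β x y => by
    rw [mul_comm]; exact hqprec β α x y
  have hpinvprec' : ∀ (α β : Ω) (x y : A),
      pinv (α * β) (prec β α x y) = prec β α (pinv β x) (pinv α y) := fun α β x y => by
    rw [mul_comm]; exact hpinvprec β α x y
  have hqinvprec' : ∀ (α β : Ω) (x y : A),
      qinv (α * β) (prec β α x y) = prec β α (qinv β x) (qinv α y) := fun α β x y => by
    rw [mul_comm]; exact hqinvprec β α x y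
  refine ⟨?_, ?_, ?_⟩
  · intro α β x y
    rw [hob, hob, map_sub, hpsucc, hpprec', hpinv1, e4, e1]
  · intro α β x y
    rw [hob, hob, map_sub, hqsucc, hqprec', e3, e5, hqinv2]
  · intro α β γ x y z
    simp only [hob, map_sub, LinearMap.sub_apply, hqsucc, hqprec, hqprec', hpsucc, hpprec,
      hpprec', hpinvsucc, hpinvprec, hpinvprec', hqinvsucc, hqinvprec, hqinvprec',
      qinv_sub, pinv_sub, hpinv1, hpinv2, hqinv1, hqinv2, e1, e2]
    rw [mul_comm β α]
    have hA : succ α (β * γ) (p α (q α x)) (succ β γ (p β y) z)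
        = succ (α * β) γ (prec α β (q α x) (p β y)) (q γ z)
          + succ (α * β) γ (succ α β (q α x) (p β y)) (q γ z) := by
      rw [hden3, map_add, LinearMap.add_apply]
    have hA' : succ β (α * γ) (p β (q β y)) (succ α γ (p α x) z)
        = succ (α * β) γ (prec β α (q β y) (p α x)) (q γ z)
          + succ (α * β) γ (succ β α (q β y) (p α x)) (q γ z) := by
      rw [hden3, map_add, LinearMap.add_apply, mul_comm β α]
    have hB : succ α (β * γ) (p α (q α x)) (prec γ β (pinv γ (q γ z)) (p β (qinv β (p β y))))
        = prec (α * γ) β (succ α γ (q α x) (pinv γ (q γ z))) (p β (p β y)) := by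
      rw [← e3 β (p β y), mul_comm β γ]
      exact (hden2 α γ β (q α x) (pinv γ (q γ z)) (p β (qinv β (p β y)))).symm
    have hB' : succ β (α * γ) (p β (q β y)) (prec γ α (pinv γ (q γ z)) (p α (qinv α (p α x))))
        = prec (β * γ) α (succ β γ (q β y) (pinv γ (q γ z))) (p α (p α x)) := by
      rw [← e3 α (p α x), mul_comm α γ]
      exact (hden2 β γ α (q β y) (pinv γ (q γ z)) (p α (qinv α (p α x)))).symm
    have hD : prec (β * γ) α (prec γ β (pinv γ (q γ (pinv γ (q γ z)))) (p β y)) (p α (p α x))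
        = prec γ (α * β) (pinv γ (q γ (q γ z))) (prec β α (p β y) (p α (qinv α (p α x))))
          + prec γ (α * β) (pinv γ (q γ (q γ z))) (succ β α (p β y) (p α (qinv α (p α x)))) := by
      have h := hden1 γ β α (pinv γ (q γ (pinv γ (q γ z)))) (p β y) (qinv α (p α (p α x)))
      rw [hqinv1, hpinv1, mul_comm γ β, mul_comm β α, map_add] at h
      rw [h, e5, ← e4]
    have hD' : prec (α * γ) β (prec γ α (pinv γ (q γ (pinv γ (q γ z)))) (p α x)) (p β (p β y))
        = prec γ (α * β) (pinv γ (q γ (q γ z))) (prec α β (p α x) (p β (qinv β (p β y))))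
          + prec γ (α * β) (pinv γ (q γ (q γ z))) (succ α β (p α x) (p β (qinv β (p β y)))) := by
      have h := hden1 γ α β (pinv γ (q γ (pinv γ (q γ z)))) (p α x) (qinv β (p β (p β y)))
      rw [hqinv1, hpinv1, mul_comm γ α, map_add] at h
      rw [h, e5, ← e4]
    rw [hA, hA', hB, hB', hD, hD']
    abel
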